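/- Let k, r, n, m be positive integers with r ≥ 2, let π = (P_1,...,P_m) be a partition of [n], and let s = (s_1,...,s_m) be a vector of positive integers with s_i ≤ |P_i| for all i and k ≤ s_1 + ... + s_m. Then χ(KG^r(π; s; k)) ≤ max{1, ⌈(n − M_{r,π}) / (r − 1) + 1⌉}. -/

import Mathlib

open Finset

/-- A proper `t`-coloring of the Kneser hypergraph `KG^r(F)`: vertices are the members of `F`,
colors are taken in `{1,...,t}`, and no set of `r` pairwise disjoint members of `F`
(an edge) is monochromatic. -/
def IsKneserColoring (n r t : ℕ) (F : Finset (Finset (Fin n)))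
    (c : Finset (Fin n) → ℕ) : Prop :=
  (∀ A ∈ F, c A ∈ Finset.Icc 1 t) ∧
    ∀ E : Finset (Finset (Fin n)), E ⊆ F → E.card = r →
      ((E : Set (Finset (Fin n))).Pairwise fun A B => Disjoint A B) →
      ¬ ∃ i, ∀ A ∈ E, c A = i

/-- The chromatic number of the Kneser hypergraph `KG^r(F)`. -/
noncomputable def kneserChrom (n r : ℕ) (F : Finset (Finset (Fin n))) : ℕ :=
  sInf {t | ∃ c, IsKneserColoring n r t F c}

/-- `P` is a partition of `[n]` (identified with `Fin n`) into `m` blocks. -/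
def IsPartition (n m : ℕ) (P : Fin m → Finset (Fin n)) : Prop :=
  (∀ i, (P i).Nonempty) ∧ (∀ i j, i ≠ j → Disjoint (P i) (P j)) ∧
    ∀ a : Fin n, ∃ i, a ∈ P i

open Classical in
/-- The vertex set of the multiple Kneser hypergraph `KG^r(π; s; k)`:
all `k`-subsets `A` of `[n]` with `|A ∩ P i| ≤ s i` for all `i`. -/
noncomputable def multiKneserVerts (n m k : ℕ) (P : Fin m → Finset (Fin n))
    (s : Fin m → ℕ) : Finset (Finset (Fin n)) :=
  Finset.univ.filter fun A => A.card = k ∧ ∀ i, (A ∩ P i).card ≤ s i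

/-- `f_{r,π}(P i) = r * s i` if `|P i| ≥ r * s i`, and `|P i|` otherwise. -/
def frpi (n m r : ℕ) (P : Fin m → Finset (Fin n)) (s : Fin m → ℕ) (i : Fin m) : ℕ :=
  if r * s i ≤ (P i).card then r * s i else (P i).card

/-- `M_{r,π}`: the maximum, over all subsets `S ⊆ [m]` with
`∑_{i ∈ S} f_{r,π}(P i) ≤ rk - 1`, of `rk - 1 + ∑_{i ∈ S} (|P i| - f_{r,π}(P i))`. -/
noncomputable def Mrpi (n m r k : ℕ) (P : Fin m → Finset (Fin n)) (s : Fin m → ℕ) : ℕ :=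
  sSup {v | ∃ S : Finset (Fin m), (∑ i ∈ S, frpi n m r P s i) ≤ r * k - 1 ∧
    v = r * k - 1 + ∑ i ∈ S, ((P i).card - frpi n m r P s i)}

-- counting lemma: no r pairwise disjoint admissible k-sets inside T = ∪_{S₀} P i ∪ Ext
lemma aux_count (n m k r : ℕ) (hk : 1 ≤ k) (hr : 2 ≤ r)
    (P : Fin m → Finset (Fin n)) (hPd : ∀ i j, i ≠ j → Disjoint (P i) (P j))
    (s : Fin m → ℕ) (S₀ : Finset (Fin m)) (Ext : Finset (Fin n))
    (hkey : (∑ i ∈ S₀, frpi n m r P s i) + Ext.card ≤ r * k - 1)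
    (𝒜 : Finset (Finset (Fin n))) (hr𝒜 : 𝒜.card = r)
    (hpd : (𝒜 : Set (Finset (Fin n))).Pairwise fun A B => Disjoint A B)
    (hAk : ∀ A ∈ 𝒜, A.card = k) (hAs : ∀ A ∈ 𝒜, ∀ i, (A ∩ P i).card ≤ s i)
    (hAT : ∀ A ∈ 𝒜, A ⊆ S₀.biUnion P ∪ Ext) : False := by
  classical
  set B := 𝒜.biUnion (fun A => A) with hB
  have hBcard : B.card = r * k := by
    rw [hB, Finset.card_biUnion (fun A hA A' hA' hne => hpd hA hA' hne)]
    calc ∑ A ∈ 𝒜, A.card = ∑ A ∈ 𝒜, k := Finset.sum_congr rfl (fun A hA => hAk A hA)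
      _ = r * k := by rw [Finset.sum_const, hr𝒜, smul_eq_mul]
  have hBi : ∀ i ∈ S₀, (B ∩ P i).card ≤ frpi n m r P s i := by
    intro i _
    have h1 : (B ∩ P i).card ≤ (P i).card := card_le_card inter_subset_right
    have h2 : (B ∩ P i).card ≤ r * s i := by
      rw [hB, Finset.biUnion_inter]
      calc (𝒜.biUnion fun A => A ∩ P i).card ≤ ∑ A ∈ 𝒜, (A ∩ P i).card :=
            Finset.card_biUnion_le
        _ ≤ ∑ A ∈ 𝒜, s i := Finset.sum_le_sum (fun A hA => hAs A hA i)
        _ = r * s i := by rw [Finset.sum_const, hr𝒜, smul_eq_mul]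
    unfold frpi; split <;> omega
  have hBW : (B ∩ S₀.biUnion P).card = ∑ i ∈ S₀, (B ∩ P i).card := by
    have : B ∩ S₀.biUnion P = S₀.biUnion fun i => B ∩ P i := by
      ext x; simp [Finset.mem_biUnion]; tauto
    rw [this, Finset.card_biUnion]
    intro i _ j _ hij
    exact Finset.disjoint_of_subset_left inter_subset_right
      (Finset.disjoint_of_subset_right inter_subset_right (hPd i j hij))
  have hsplit : B.card ≤ (B ∩ S₀.biUnion P).card + Ext.card := by
    have hsub : B ⊆ (B ∩ S₀.biUnion P) ∪ Ext := by
      intro x hx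
      obtain ⟨A, hA, hxA⟩ := Finset.mem_biUnion.mp hx
      rcases Finset.mem_union.mp (hAT A hA hxA) with h | h
      · exact Finset.mem_union_left _ (Finset.mem_inter.mpr ⟨hx, h⟩)
      · exact Finset.mem_union_right _ h
    calc B.card ≤ ((B ∩ S₀.biUnion P) ∪ Ext).card := card_le_card hsub
      _ ≤ _ := card_union_le _ _
  have hsum : (B ∩ S₀.biUnion P).card ≤ ∑ i ∈ S₀, frpi n m r P s i := by
    rw [hBW]; exact Finset.sum_le_sum hBi
  have hrk : 2 * 1 ≤ r * k := Nat.mul_le_mul hr hk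
  omega

-- fiber lemma
lemma aux_fiber (n d j : ℕ) (hd : 0 < d) (U : Finset (Fin n)) :
    (U.filter fun x => (U.filter (· < x)).card / d = j).card ≤ d := by
  classical
  have h := Finset.card_le_card_of_injOn (s := U.filter fun x => (U.filter (· < x)).card / d = j)
    (t := Finset.Ico (j * d) (j * d + d)) (fun x => (U.filter (· < x)).card) ?_ ?_
  · simpa using h
  · intro x hx
    dsimp only
    obtain ⟨_, hx2⟩ := Finset.mem_filter.mp hx
    rw [Finset.mem_coe, Finset.mem_Ico]
    constructor
    · exact (Nat.le_div_iff_mul_le hd).mp hx2.ge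
    · have : (U.filter (· < x)).card / d < j + 1 := by omega
      have := (Nat.div_lt_iff_lt_mul hd).mp this
      have e : (j + 1) * d = j * d + d := by ring
      omega
  · -- injectivity: x ↦ card of elements below x is strictly monotone on U
    have key : ∀ x ∈ U, ∀ y ∈ U, x < y →
        (U.filter (· < x)).card < (U.filter (· < y)).card := by
      intro x hxU y _ hxy
      apply Finset.card_lt_card
      constructor
      · intro z hz
        obtain ⟨hz1, hz2⟩ := Finset.mem_filter.mp hz
        exact Finset.mem_filter.mpr ⟨hz1, lt_trans hz2 hxy⟩
      · intro hcon
        have hxmem : x ∈ U.filter (· < y) := Finset.mem_filter.mpr ⟨hxU, hxy⟩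
        have := Finset.mem_filter.mp (hcon hxmem)
        exact absurd this.2 (lt_irrefl x)
    intro x hx y hy hxy
    simp only [Finset.coe_filter, Set.mem_setOf_eq] at hx hy
    rcases lt_trichotomy x y with h | h | h
    · exact absurd hxy (Nat.ne_of_lt (key x hx.1 y hy.1 h))
    · exact h
    · exact absurd hxy.symm (Nat.ne_of_lt (key y hy.1 x hx.1 h))

/-- group index of an element: rank within U, divided into blocks of size d. -/
def gcol (n d : ℕ) (U : Finset (Fin n)) (x : Fin n) : ℕ :=
  (U.filter (· < x)).card / d + 1

/-- a chosen element of `A \ T` (or junk). -/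
noncomputable def xel (n : ℕ) (hn : 1 ≤ n) (T A : Finset (Fin n)) : Fin n :=
  if h : (A \ T).Nonempty then (A \ T).min' h else ⟨0, hn⟩

/-- number of groups -/
def qdef (n r : ℕ) (T : Finset (Fin n)) : ℕ :=
  ((Finset.univ \ T).card + (r - 1) - 1) / (r - 1)

open Classical in
noncomputable def ccol (n r : ℕ) (hn : 1 ≤ n) (T A : Finset (Fin n)) : ℕ :=
  if A ⊆ T then qdef n r T + 1 else gcol n (r - 1) (Finset.univ \ T) (xel n hn T A)

lemma gcol_le (n d : ℕ) (hd : 0 < d) (U : Finset (Fin n)) (x : Fin n) (hx : x ∈ U) :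
    gcol n d U x ≤ (U.card + d - 1) / d := by
  have hUpos : 1 ≤ U.card := Finset.card_pos.mpr ⟨x, hx⟩
  have hidx : (U.filter (· < x)).card ≤ U.card - 1 := by
    have hsub : U.filter (· < x) ⊆ U.erase x := by
      intro y hy
      obtain ⟨hy1, hy2⟩ := Finset.mem_filter.mp hy
      exact Finset.mem_erase.mpr ⟨ne_of_lt hy2, hy1⟩
    calc (U.filter (· < x)).card ≤ (U.erase x).card := card_le_card hsub
      _ = U.card - 1 := Finset.card_erase_of_mem hx
  have h1 : (U.filter (· < x)).card / d ≤ (U.card - 1) / d :=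
    Nat.div_le_div_right hidx
  have h2 : (U.card - 1) / d + 1 = (U.card - 1 + d) / d := (Nat.add_div_right _ hd).symm
  have h3 : U.card - 1 + d = U.card + d - 1 := by omega
  rw [h3] at h2
  unfold gcol
  omega

lemma xel_mem (n : ℕ) (hn : 1 ≤ n) (T A : Finset (Fin n)) (h : ¬ A ⊆ T) :
    xel n hn T A ∈ A \ T := by
  have hne : (A \ T).Nonempty := Finset.sdiff_nonempty.mpr h
  rw [xel, dif_pos hne]
  exact Finset.min'_mem _ hne

lemma xel_memU (n : ℕ) (hn : 1 ≤ n) (T A : Finset (Fin n)) (h : ¬ A ⊆ T) :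
    xel n hn T A ∈ Finset.univ \ T :=
  Finset.mem_sdiff.mpr ⟨Finset.mem_univ _, (Finset.mem_sdiff.mp (xel_mem n hn T A h)).2⟩

lemma main_coloring (n r : ℕ) (hn : 1 ≤ n) (hr : 2 ≤ r) (F : Finset (Finset (Fin n)))
    (T : Finset (Fin n))
    (hT : ∀ 𝒜 : Finset (Finset (Fin n)), 𝒜 ⊆ F → 𝒜.card = r →
      ((𝒜 : Set (Finset (Fin n))).Pairwise fun A B => Disjoint A B) →
      (∀ A ∈ 𝒜, A ⊆ T) → False) :
    ∃ c, IsKneserColoring n r (qdef n r T + 1) F c := by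
  classical
  have hdpos : 0 < r - 1 := by omega
  have hgle : ∀ A, ¬ A ⊆ T → gcol n (r - 1) (Finset.univ \ T) (xel n hn T A) ≤ qdef n r T := by
    intro A h
    have := gcol_le n (r - 1) hdpos (Finset.univ \ T) _ (xel_memU n hn T A h)
    rw [qdef]
    exact this
  refine ⟨ccol n r hn T, ?_, ?_⟩
  · intro A _
    rw [Finset.mem_Icc, ccol]
    split
    · omega
    · next h =>
      have h1 := hgle A h
      have hg1 : 1 ≤ gcol n (r - 1) (Finset.univ \ T) (xel n hn T A) := Nat.le_add_left 1 _
      omega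
  · rintro E hEF hEr hEpd ⟨i, hi⟩
    have hEne : E.Nonempty := Finset.card_pos.mp (by omega)
    obtain ⟨A₀, hA₀⟩ := hEne
    by_cases h₀ : A₀ ⊆ T
    · -- color is q+1; all members inside T; contradiction with hT
      have hiq : i = qdef n r T + 1 := by
        have := hi A₀ hA₀
        rw [ccol, if_pos h₀] at this
        omega
      have hallT : ∀ A ∈ E, A ⊆ T := by
        intro A hA
        by_contra h
        have hcA := hi A hA
        rw [ccol, if_neg h] at hcA
        have := hgle A h
        omega
      exact hT E hEF hEr hEpd hallT
    · -- color is ≤ q; pigeonhole in the fiber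
      have hc₀ := hi A₀ hA₀
      rw [ccol, if_neg h₀] at hc₀
      have hile : i ≤ qdef n r T := hc₀ ▸ hgle A₀ h₀
      have hnT : ∀ A ∈ E, ¬ A ⊆ T := by
        intro A hA h
        have := hi A hA
        rw [ccol, if_pos h] at this
        omega
      have hmem : ∀ A ∈ E, xel n hn T A ∈
          (Finset.univ \ T).filter fun x => ((Finset.univ \ T).filter (· < x)).card / (r - 1) = i - 1 := by
        intro A hA
        have hcA := hi A hA
        rw [ccol, if_neg (hnT A hA), gcol] at hcA
        refine Finset.mem_filter.mpr ⟨xel_memU n hn T A (hnT A hA), ?_⟩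
        exact Nat.eq_sub_of_add_eq hcA
      have hinj : Set.InjOn (xel n hn T) E := by
        intro A hA B hB hAB
        by_contra hne
        have hdisj := hEpd hA hB hne
        have h1 : xel n hn T A ∈ A :=
          (Finset.mem_sdiff.mp (xel_mem n hn T A (hnT A (Finset.mem_coe.mp hA)))).1
        have h2 : xel n hn T B ∈ B :=
          (Finset.mem_sdiff.mp (xel_mem n hn T B (hnT B (Finset.mem_coe.mp hB)))).1
        rw [hAB] at h1
        exact Finset.disjoint_left.mp hdisj h1 h2
      have hcard : E.card ≤ r - 1 := by
        calc E.card ≤ ((Finset.univ \ T).filter fun x =>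
              ((Finset.univ \ T).filter (· < x)).card / (r - 1) = i - 1).card :=
              Finset.card_le_card_of_injOn (xel n hn T) hmem hinj
          _ ≤ r - 1 := aux_fiber n (r - 1) (i - 1) hdpos _
      omega

theorem stmt8 (n m k r : ℕ) (hn : 1 ≤ n) (hm : 1 ≤ m) (hk : 1 ≤ k) (hr : 2 ≤ r)
    (P : Fin m → Finset (Fin n)) (hP : IsPartition n m P)
    (s : Fin m → ℕ) (hs : ∀ i, 1 ≤ s i) (hsP : ∀ i, s i ≤ (P i).card)
    (hks : k ≤ ∑ i, s i) :
    (kneserChrom n r (multiKneserVerts n m k P s) : ℤ) ≤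
      max 1 ⌈((n : ℚ) - (Mrpi n m r k P s : ℚ)) / ((r : ℚ) - 1) + 1⌉ := by
  classical
  obtain ⟨-, hPd, -⟩ := hP
  have hrk : 2 * 1 ≤ r * k := Nat.mul_le_mul hr hk
  -- extract an optimal S₀ from the sSup
  have hne : {v | ∃ S : Finset (Fin m), (∑ i ∈ S, frpi n m r P s i) ≤ r * k - 1 ∧
      v = r * k - 1 + ∑ i ∈ S, ((P i).card - frpi n m r P s i)}.Nonempty :=
    ⟨r * k - 1, ∅, by simp, by simp⟩
  have hbdd : BddAbove {v | ∃ S : Finset (Fin m), (∑ i ∈ S, frpi n m r P s i) ≤ r * k - 1 ∧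
      v = r * k - 1 + ∑ i ∈ S, ((P i).card - frpi n m r P s i)} := by
    refine ⟨r * k - 1 + ∑ i, (P i).card, ?_⟩
    rintro v ⟨S, -, rfl⟩
    refine Nat.add_le_add_left ?_ _
    calc ∑ i ∈ S, ((P i).card - frpi n m r P s i) ≤ ∑ i ∈ S, (P i).card :=
          Finset.sum_le_sum fun i _ => Nat.sub_le _ _
      _ ≤ ∑ i, (P i).card := Finset.sum_le_sum_of_subset (Finset.subset_univ S)
  obtain ⟨S₀, hS₀1, hS₀2⟩ : ∃ S : Finset (Fin m),
      (∑ i ∈ S, frpi n m r P s i) ≤ r * k - 1 ∧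
      Mrpi n m r k P s = r * k - 1 + ∑ i ∈ S, ((P i).card - frpi n m r P s i) :=
    Nat.sSup_mem hne hbdd
  have hfle : ∀ i, frpi n m r P s i ≤ (P i).card := by
    intro i; unfold frpi; split <;> omega
  have hsum_sub : ∑ i ∈ S₀, ((P i).card - frpi n m r P s i) =
      ∑ i ∈ S₀, (P i).card - ∑ i ∈ S₀, frpi n m r P s i :=
    Finset.sum_tsub_distrib S₀ fun i _ => hfle i
  have hfW : ∑ i ∈ S₀, frpi n m r P s i ≤ ∑ i ∈ S₀, (P i).card :=
    Finset.sum_le_sum fun i _ => hfle i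
  -- the set W and the extra elements Ext
  set W := S₀.biUnion P with hW
  have hWcard : W.card = ∑ i ∈ S₀, (P i).card :=
    Finset.card_biUnion fun i _ j _ hij => hPd i j hij
  have hWn : W.card ≤ n := le_trans (Finset.card_le_univ W) (by simp)
  have hUW : ((Finset.univ : Finset (Fin n)) \ W).card = n - W.card := by
    rw [Finset.card_sdiff_of_subset (Finset.subset_univ W)]; simp
  obtain ⟨Ext, hExtsub, hExtcard⟩ :
      ∃ Ext ⊆ (Finset.univ : Finset (Fin n)) \ W,
        Ext.card = min (r * k - 1 - ∑ i ∈ S₀, frpi n m r P s i) (n - W.card) := by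
    apply Finset.exists_subset_card_eq
    rw [hUW]; omega
  set T := W ∪ Ext with hT
  have hdisj : Disjoint W Ext :=
    Finset.disjoint_right.mpr fun x hx => (Finset.mem_sdiff.mp (hExtsub hx)).2
  have hTcard : T.card = W.card + Ext.card := Finset.card_union_of_disjoint hdisj
  have hkey : (∑ i ∈ S₀, frpi n m r P s i) + Ext.card ≤ r * k - 1 := by omega
  -- no monochromatic structure inside T
  have hTprop : ∀ 𝒜 : Finset (Finset (Fin n)), 𝒜 ⊆ multiKneserVerts n m k P s → 𝒜.card = r →
      ((𝒜 : Set (Finset (Fin n))).Pairwise fun A B => Disjoint A B) →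
      (∀ A ∈ 𝒜, A ⊆ T) → False := by
    intro 𝒜 h1 h2 h3 h4
    have hmem : ∀ A ∈ 𝒜, A.card = k ∧ ∀ i, (A ∩ P i).card ≤ s i := by
      intro A hA
      have := h1 hA
      simpa [multiKneserVerts] using this
    exact aux_count n m k r hk hr P hPd s S₀ Ext hkey 𝒜 h2 h3
      (fun A hA => (hmem A hA).1) (fun A hA => (hmem A hA).2) h4
  obtain ⟨c, hc⟩ := main_coloring n r hn hr (multiKneserVerts n m k P s) T hTprop
  have hchrom : kneserChrom n r (multiKneserVerts n m k P s) ≤ qdef n r T + 1 :=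
    Nat.sInf_le ⟨c, hc⟩
  -- arithmetic
  have hUT : ((Finset.univ : Finset (Fin n)) \ T).card = n - T.card := by
    rw [Finset.card_sdiff_of_subset (Finset.subset_univ T)]; simp
  set u := ((Finset.univ : Finset (Fin n)) \ T).card with hu
  set q := qdef n r T with hqd
  have hqdef : q = (u + (r - 1) - 1) / (r - 1) := rfl
  have hchrZ : (kneserChrom n r (multiKneserVerts n m k P s) : ℤ) ≤ (q : ℤ) + 1 := by
    exact_mod_cast Nat.cast_le.mpr hchrom
  by_cases hU0 : u = 0
  · -- everything inside T : one color suffices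
    have hq0 : q = 0 := by
      rw [hqdef, hU0]
      exact Nat.div_eq_of_lt (by omega)
    refine le_trans ?_ (le_max_left _ _)
    rw [hq0] at hchrZ
    simpa using hchrZ
  · -- T has exactly M elements
    have hupos : 1 ≤ u := by omega
    have hTn : T.card ≤ n := le_trans (Finset.card_le_univ T) (by simp)
    have hTcard_lt : T.card < n := by omega
    have hM : Mrpi n m r k P s = T.card := by
      rw [hS₀2, hsum_sub]
      omega
    have hMn : Mrpi n m r k P s < n := by omega
    have huM : u = n - Mrpi n m r k P s := by omega
    refine le_trans ?_ (le_max_right _ _)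
    refine le_trans hchrZ ?_
    have hcast : ((n : ℚ) - (Mrpi n m r k P s : ℚ)) / ((r : ℚ) - 1) =
        ((u : ℚ)) / (((r - 1 : ℕ) : ℚ)) := by
      rw [huM]
      rw [Nat.cast_sub (le_of_lt hMn), Nat.cast_sub (by omega : 1 ≤ r)]
      norm_num
    rw [hcast, Int.ceil_add_one]
    have hgoal : (q : ℤ) ≤ ⌈(u : ℚ) / ((r - 1 : ℕ) : ℚ)⌉ := by
      have hd' : (0 : ℚ) < ((r - 1 : ℕ) : ℚ) := by
        have : 1 ≤ r - 1 := by omega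
        exact_mod_cast Nat.pos_of_ne_zero (by omega)
      by_cases hq0 : q = 0
      · rw [hq0]
        exact_mod_cast (Int.ceil_nonneg (div_nonneg (by positivity : (0:ℚ) ≤ u) (le_of_lt hd')) : (0:ℤ) ≤ ⌈(u : ℚ) / ((r - 1 : ℕ) : ℚ)⌉)
      · have hq1 : 1 ≤ q := Nat.pos_of_ne_zero hq0
        have hnatlt : (q - 1) * (r - 1) < u := by
          have h1 : q * (r - 1) ≤ u + (r - 1) - 1 := by
            rw [hqdef]
            exact Nat.div_mul_le_self _ _
          have h2 : (q - 1) * (r - 1) + (r - 1) = q * (r - 1) := by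
            have : q - 1 + 1 = q := by omega
            calc (q - 1) * (r - 1) + (r - 1) = (q - 1 + 1) * (r - 1) := by ring
              _ = q * (r - 1) := by rw [this]
          omega
        have hlt : ((q : ℤ) - 1 : ℚ) < (u : ℚ) / ((r - 1 : ℕ) : ℚ) := by
          rw [lt_div_iff₀ hd']
          have : (((q - 1) * (r - 1) : ℕ) : ℚ) < ((u : ℕ) : ℚ) := by exact_mod_cast hnatlt
          calc ((q : ℤ) - 1 : ℚ) * ((r - 1 : ℕ) : ℚ)
              = (((q - 1 : ℕ) : ℚ)) * ((r - 1 : ℕ) : ℚ) := by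
                rw [Nat.cast_sub hq1]; push_cast; ring
            _ = (((q - 1) * (r - 1) : ℕ) : ℚ) := by push_cast; ring
            _ < (u : ℚ) := this
        have hlt2 : ((((q : ℤ) - 1) : ℤ) : ℚ) < (u : ℚ) / ((r - 1 : ℕ) : ℚ) := by
          push_cast
          exact_mod_cast hlt
        have := Int.lt_ceil.mpr hlt2
        omega
    omega
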